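/- arXiv:math/0612260 — 2 statements merged into one kernel-verified Lean document; each statement's English description precedes it below -/
import Mathlib

section
/- Let {h'_n}_{n≥1} and {h''_n}_{n≥1} be non-random sequences with 0 < h'_n ≤ h''_n < 1 such that each of {h'_n} and {h''_n} satisfies (H.1), (H.2), (H.3), and such that the pair satisfies (H.4)(ii). Then, for any fixed λ > 1, with probability one, for all n sufficiently large and for every h ∈ [h'_n, h''_n], V_n(1 − λh) < 1 − h. -/
open MeasureTheory Filter Set Asymptotics
open scoped Classical

noncomputable section

/-- Empirical distribution function of the first `n` observations. -/
def empDF {Ω : Type*} (X : ℕ → Ω → ℝ) (n : ℕ) (x : ℝ) (ω : Ω) : ℝ :=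
  (((Finset.range n).filter (fun i => X i ω ≤ x)).card : ℝ) / (n : ℝ)

/-- The Strassen set `S₀`: absolutely continuous functions `g` on `[-1,1]` with `g 0 = 0`
and Lebesgue derivative `d` satisfying `∫_{-1}^{1} d(s)² ds ≤ 1`. -/
def StrassenSet : Set (ℝ → ℝ) :=
  {g | g 0 = 0 ∧ ∃ d : ℝ → ℝ,
    IntervalIntegrable d volume (-1) 1 ∧
    IntervalIntegrable (fun u => d u ^ 2) volume (-1) 1 ∧
    (∀ s ∈ Icc (-1 : ℝ) 1, g s = ∫ u in (0 : ℝ)..s, d u) ∧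
    (∫ u in (-1 : ℝ)..(1 : ℝ), d u ^ 2) ≤ 1}

/-- Sup-norm over `[-1,1]`. -/
def supNorm (g : ℝ → ℝ) : ℝ := ⨆ s : Icc (-1 : ℝ) 1, |g s.1|

/-- Sup-norm over `[0,1]`. -/
def supNormP (g : ℝ → ℝ) : ℝ := ⨆ s : Icc (0 : ℝ) 1, |g s.1|

/-- (H.1): `h_n ↓ 0` and `n·h_n ↑ ∞`. -/
def H1 (h : ℕ → ℝ) : Prop :=
  Antitone h ∧ Tendsto h atTop (nhds 0) ∧
    Monotone (fun n : ℕ => (n : ℝ) * h n) ∧ Tendsto (fun n : ℕ => (n : ℝ) * h n) atTop atTop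

/-- (H.2): `log(1/h_n)/log log n → ∞`. -/
def H2 (h : ℕ → ℝ) : Prop :=
  Tendsto (fun n : ℕ => Real.log (1 / h n) / Real.log (Real.log n)) atTop atTop

/-- (H.3): `n·h_n/log n → ∞`. -/
def H3 (h : ℕ → ℝ) : Prop :=
  Tendsto (fun n : ℕ => (n : ℝ) * h n / Real.log n) atTop atTop

/-- (H.4)(i). -/
def H4i (h₁ : ℕ → ℝ) : Prop :=
  Tendsto (fun n : ℕ => Real.sqrt n * h₁ n * Real.log (1 / h₁ n) /
    (Real.log n * Real.sqrt (Real.log (Real.log n)))) atTop atTop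

/-- (H.4)(ii). -/
def H4ii (h₁ h₂ : ℕ → ℝ) : Prop :=
  (fun n : ℕ => Real.sqrt (h₂ n * Real.log (1 / h₂ n)) / (h₁ n * Real.log (1 / h₁ n)))
    =o[atTop] (fun n : ℕ => Real.sqrt n / Real.log n)

/-- (H.4): (i) or (ii). -/
def H4 (h₁ h₂ : ℕ → ℝ) : Prop := H4i h₁ ∨ H4ii h₁ h₂

/-- iid uniform (0,1) random variables. -/
def IsUniformSample {Ω : Type*} [MeasurableSpace Ω] (P : Measure Ω) (U : ℕ → Ω → ℝ) : Prop :=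
  (∀ i, Measurable (U i)) ∧
  ProbabilityTheory.iIndepFun U P ∧
  (∀ i, ∀ t ∈ Icc (0 : ℝ) 1, P {ω | U i ω ≤ t} = ENNReal.ofReal t)

/-- Uniform empirical quantile function `V_n`. -/
def empQV {Ω : Type*} (U : ℕ → Ω → ℝ) (n : ℕ) (t : ℝ) (ω : Ω) : ℝ :=
  sInf {u : ℝ | 0 ≤ u ∧ t ≤ empDF U n u ω}

/-- Uniform empirical process `α_n`. -/
def empProc {Ω : Type*} (U : ℕ → Ω → ℝ) (n : ℕ) (t : ℝ) (ω : Ω) : ℝ :=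
  Real.sqrt n * (empDF U n t ω - t)

/-- Uniform quantile process `β_n`. -/
def quantProc {Ω : Type*} (U : ℕ → Ω → ℝ) (n : ℕ) (t : ℝ) (ω : Ω) : ℝ :=
  Real.sqrt n * (empQV U n t ω - t)

/-- Increments `ξ_n(h,t;s)` of the uniform empirical process. -/
def xiInc {Ω : Type*} (U : ℕ → Ω → ℝ) (n : ℕ) (h t s : ℝ) (ω : Ω) : ℝ :=
  empProc U n (t + h * s) ω - empProc U n t ω

/-- Increments `ζ_n(h,t;s)` of the uniform quantile process. -/
def zetaInc {Ω : Type*} (U : ℕ → Ω → ℝ) (n : ℕ) (h t s : ℝ) (ω : Ω) : ℝ :=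
  quantProc U n (t + h * s) ω - quantProc U n t ω

open ProbabilityTheory in
set_option maxHeartbeats 1000000 in
lemma _root_.aux_placeholder : True := trivial

/-- count of observations exceeding `1 - s` -/
def cnt {Ω : Type*} (U : ℕ → Ω → ℝ) (n : ℕ) (s : ℝ) (ω : Ω) : ℕ :=
  ((Finset.range n).filter (fun i => 1 - s < U i ω)).card

open ProbabilityTheory in
set_option maxHeartbeats 1000000 in
lemma chernoff_cnt {Ω : Type*} [MeasurableSpace Ω] (P : Measure Ω) [IsProbabilityMeasure P]
    (U : ℕ → Ω → ℝ) (hU : IsUniformSample P U) (n : ℕ) (s : ℝ) (hs0 : 0 < s) (hs1 : s ≤ 1)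
    (mu : ℝ) (hmu : 1 < mu) :
    (P {ω | mu * n * s ≤ (cnt U n s ω : ℝ)}).toReal
      ≤ Real.exp (-(mu * Real.log mu - mu + 1) * (n * s)) := by
  classical
  obtain ⟨hmeas, hindep, hcdf⟩ := hU
  set t : ℝ := Real.log mu with ht
  have hmu0 : (0:ℝ) < mu := lt_trans one_pos hmu
  have ht0 : 0 ≤ t := Real.log_nonneg hmu.le
  -- indicator random variables
  set X : ℕ → Ω → ℝ := fun i ω => if 1 - s < U i ω then 1 else 0 with hX
  have hXmeas : ∀ i, Measurable (X i) := by
    intro i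
    exact Measurable.ite (measurableSet_lt measurable_const (hmeas i))
      measurable_const measurable_const
  have hXindep : ProbabilityTheory.iIndepFun X P := by
    have : X = fun i => (fun x : ℝ => if 1 - s < x then (1:ℝ) else 0) ∘ U i := rfl
    rw [this]
    exact hindep.comp _ (fun i => Measurable.ite measurableSet_Ioi
      measurable_const measurable_const)
  -- probability of exceedance set
  have hAmeas : ∀ i, MeasurableSet {ω | 1 - s < U i ω} :=
    fun i => measurableSet_lt measurable_const (hmeas i)
  have hPA : ∀ i, (P {ω | 1 - s < U i ω}).toReal = s := by
    intro i
    have hcompl : {ω | 1 - s < U i ω} = {ω | U i ω ≤ 1 - s}ᶜ := by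
      ext ω; simp [not_le]
    rw [hcompl, measure_compl (measurableSet_le (hmeas i) measurable_const)
      (measure_ne_top _ _), hcdf i (1-s) ⟨by linarith, by linarith⟩]
    rw [measure_univ]
    have : (1:ENNReal) - ENNReal.ofReal (1-s) = ENNReal.ofReal s := by
      rw [← ENNReal.ofReal_one, ← ENNReal.ofReal_sub _ (by linarith : (0:ℝ) ≤ 1 - s)]
      norm_num
    rw [this, ENNReal.toReal_ofReal hs0.le]
  -- mgf of each indicator
  have hmgf : ∀ i, mgf (X i) P t = 1 + s * (mu - 1) := by
    intro i
    have hfun : (fun ω => Real.exp (t * X i ω))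
        = fun ω => Set.indicator {ω | 1 - s < U i ω} (fun _ => mu - 1) ω + 1 := by
      funext ω
      by_cases hω : 1 - s < U i ω
      · simp [hX, hω, Set.indicator_of_mem, ht, Real.exp_log hmu0]
      · simp [hX, hω, Set.indicator_of_notMem, Real.exp_zero]
    rw [mgf, hfun, integral_add ((integrable_const (mu-1)).indicator (hAmeas i))
      (integrable_const 1), integral_indicator_const _ (hAmeas i), integral_const]
    simp [hPA i, measure_univ]
    rw [measureReal_def, hPA i]
    ring
  -- the sum of indicators
  have hcnt : ∀ ω, (cnt U n s ω : ℝ) = (∑ i ∈ Finset.range n, X i) ω := by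
    intro ω
    rw [cnt, Finset.card_filter]
    push_cast
    simp [hX]
  have hSmeas : Measurable (∑ i ∈ Finset.range n, X i) := by
    have : (∑ i ∈ Finset.range n, X i) = fun a => ∑ i ∈ Finset.range n, X i a := by
      funext a; simp
    rw [this]; exact Finset.measurable_sum _ (fun i _ => hXmeas i)
  have hSle : ∀ ω, (∑ i ∈ Finset.range n, X i) ω ≤ n := by
    intro ω
    rw [Finset.sum_apply]
    calc ∑ i ∈ Finset.range n, X i ω ≤ ∑ _i ∈ Finset.range n, (1:ℝ) :=
          Finset.sum_le_sum (fun i _ => by by_cases h : 1 - s < U i ω <;> simp [hX, h])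
      _ = n := by simp
  have hint : Integrable (fun ω => Real.exp (t * (∑ i ∈ Finset.range n, X i) ω)) P := by
    refine Integrable.mono' (integrable_const (Real.exp (t * n)))
      ((hSmeas.const_mul t).exp.aestronglyMeasurable) ?_
    filter_upwards with ω
    rw [Real.norm_eq_abs, abs_of_pos (Real.exp_pos _)]
    exact Real.exp_le_exp.2 (mul_le_mul_of_nonneg_left (hSle ω) ht0)
  have hset : {ω | mu * n * s ≤ (cnt U n s ω : ℝ)}
      = {ω | mu * n * s ≤ (∑ i ∈ Finset.range n, X i) ω} := by
    ext ω; simp only [Set.mem_setOf_eq, hcnt ω]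
  have hmgfS : mgf (∑ i ∈ Finset.range n, X i) P t = (1 + s*(mu-1))^n := by
    rw [hXindep.mgf_sum hXmeas]
    rw [Finset.prod_congr rfl (fun i _ => hmgf i)]
    rw [Finset.prod_const, Finset.card_range]
  have h1s : (0:ℝ) ≤ 1 + s * (mu - 1) := by nlinarith
  calc (P {ω | mu * n * s ≤ (cnt U n s ω : ℝ)}).toReal
      ≤ Real.exp (-t * (mu * n * s)) * mgf (∑ i ∈ Finset.range n, X i) P t := by
        rw [hset]; exact measure_ge_le_exp_mul_mgf _ ht0 hint
    _ ≤ Real.exp (-t * (mu * n * s)) * Real.exp ((n:ℝ) * (s * (mu - 1))) := by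
        rw [hmgfS, Real.exp_nat_mul]
        refine mul_le_mul_of_nonneg_left (pow_le_pow_left₀ h1s ?_ n) (Real.exp_pos _).le
        linarith [Real.add_one_le_exp (s * (mu - 1))]
    _ = Real.exp (-(mu * Real.log mu - mu + 1) * (n * s)) := by
        rw [← Real.exp_add]
        congr 1
        rw [ht]; ring


lemma exists_grid (t : ℕ → ℝ) (g : ℝ) :
    ∀ J : ℕ, 0 < J → t 0 ≤ g → g ≤ t J → ∃ j, j < J ∧ t j ≤ g ∧ g ≤ t (j+1) := by
  intro J
  induction J with
  | zero => intro h; exact absurd h (lt_irrefl 0)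
  | succ J ih =>
    intro _ h0 hJ
    by_cases hc : t J ≤ g
    · exact ⟨J, Nat.lt_succ_self J, hc, hJ⟩
    · have hJ0 : 0 < J := by
        rcases Nat.eq_zero_or_pos J with h | h
        · exact absurd h0 (by subst h; exact hc)
        · exact h
      obtain ⟨j, hj, hj1, hj2⟩ := ih hJ0 h0 (not_le.mp hc).le
      exact ⟨j, Nat.lt_succ_of_lt hj, hj1, hj2⟩

lemma cnt_mono {Ω : Type*} (U : ℕ → Ω → ℝ) (n : ℕ) (ω : Ω) {a b : ℝ} (hab : a ≤ b) :
    cnt U n a ω ≤ cnt U n b ω := by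
  apply Finset.card_le_card
  intro i hi
  simp only [Finset.mem_filter] at hi ⊢
  exact ⟨hi.1, lt_of_le_of_lt (by linarith) hi.2⟩

set_option maxHeartbeats 1000000 in
lemma det_step {Ω : Type*} (U : ℕ → Ω → ℝ) (n : ℕ) (hn : 0 < n) (ω : Ω)
    (lam c mu h1 h2 : ℝ) (J : ℕ)
    (hc1 : 1 < c) (hmusq : mu * mu = lam / c) (hmu1 : 1 < mu)
    (h10 : 0 < h1) (h12 : h1 ≤ h2) (hch2 : c * h2 ≤ 1)
    (hJ : c * h2 ≤ h1 * mu ^ J) (hJpos : 0 < J)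
    (hcnt : ∀ j < J, (cnt U n (min (h1 * mu^(j+1)) (c*h2)) ω : ℝ)
        < mu * n * min (h1 * mu^(j+1)) (c*h2)) :
    ∀ h, h1 ≤ h → h ≤ h2 → empQV U n (1 - lam*h) ω < 1 - h := by
  intro h hh1 hh2
  have hc0 : (0:ℝ) < c := lt_trans one_pos hc1
  have hh0 : 0 < h := lt_of_lt_of_le h10 hh1
  set g := c * h with hg
  have hg1 : h1 ≤ g := le_trans hh1 (le_mul_of_one_le_left hh0.le hc1.le)
  have hg2 : g ≤ c * h2 := by
    rw [hg]; exact mul_le_mul_of_nonneg_left hh2 hc0.le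
  obtain ⟨j, hjJ, hj1, hj2⟩ := exists_grid (fun j => h1 * mu ^ j) g J hJpos
    (by simpa using hg1) (le_trans hg2 hJ)
  set s := min (h1 * mu^(j+1)) (c*h2) with hs
  have hgs : g ≤ s := le_min hj2 hg2
  have hkey : (cnt U n g ω : ℝ) < lam * n * h := by
    have h1' := hcnt j hjJ
    have hmono : (cnt U n g ω : ℝ) ≤ (cnt U n s ω : ℝ) := by
      exact_mod_cast cnt_mono U n ω hgs
    have hstep : mu * n * s ≤ lam * n * h := by
      have h2' : s ≤ h1 * mu^(j+1) := min_le_left _ _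
      have h3' : mu * (n:ℝ) * s ≤ mu * n * (h1 * mu^(j+1)) := by
        apply mul_le_mul_of_nonneg_left h2'
        positivity
      have h4' : mu * (n:ℝ) * (h1 * mu^(j+1)) = mu * mu * ((n:ℝ) * (h1 * mu^j)) := by
        rw [pow_succ]; ring
      have h5' : mu * mu * ((n:ℝ) * (h1 * mu^j)) ≤ mu * mu * ((n:ℝ) * g) := by
        apply mul_le_mul_of_nonneg_left
        · apply mul_le_mul_of_nonneg_left hj1 (Nat.cast_nonneg n)
        · nlinarith
      have h6' : mu * mu * ((n:ℝ) * g) = lam * n * h := by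
        rw [hmusq, hg]
        field_simp
      linarith
    linarith
  have hEDF : 1 - lam * h ≤ empDF U n (1 - g) ω := by
    have hsplit : ((Finset.range n).filter (fun i => U i ω ≤ 1 - g)).card + cnt U n g ω = n := by
      rw [cnt]
      have heq : (Finset.range n).filter (fun i => 1 - g < U i ω)
          = (Finset.range n).filter (fun a => ¬ U a ω ≤ 1 - g) := by
        apply Finset.filter_congr; intro i _; simp [not_le]
      rw [heq]
      have hfc := Finset.card_filter_add_card_filter_not
        (s := Finset.range n) (p := fun i => U i ω ≤ 1 - g)
      rw [Finset.card_range] at hfc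
      exact hfc
    rw [empDF, le_div_iff₀ (by exact_mod_cast hn : (0:ℝ) < (n:ℝ))]
    have : (((Finset.range n).filter (fun i => U i ω ≤ 1 - g)).card : ℝ)
        = (n : ℝ) - cnt U n g ω := by
      have := congrArg (Nat.cast (R := ℝ)) hsplit
      push_cast at this
      linarith
    rw [this]
    nlinarith [hkey]
  have hmem : (1 - g) ∈ {u : ℝ | 0 ≤ u ∧ 1 - lam * h ≤ empDF U n u ω} :=
    ⟨by linarith, hEDF⟩
  have hle : empQV U n (1 - lam * h) ω ≤ 1 - g :=
    csInf_le ⟨0, fun x hx => hx.1⟩ hmem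
  have : h < g := by rw [hg]; nlinarith
  linarith


set_option maxHeartbeats 1000000 in
theorem stmt_12
    {Ω : Type*} [MeasurableSpace Ω] (P : Measure Ω) [IsProbabilityMeasure P]
    (U : ℕ → Ω → ℝ) (hU : IsUniformSample P U)
    (h₁ h₂ : ℕ → ℝ) (hpos : ∀ n, 0 < h₁ n) (hle : ∀ n, h₁ n ≤ h₂ n) (hlt : ∀ n, h₂ n < 1)
    (hH11 : H1 h₁) (hH12 : H1 h₂) (hH21 : H2 h₁) (hH22 : H2 h₂)
    (hH31 : H3 h₁) (hH32 : H3 h₂) (hH4 : H4ii h₁ h₂)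
    (lam : ℝ) (hlam : 1 < lam) :
    ∀ᵐ ω ∂P, ∀ᶠ n in atTop, ∀ h ∈ Icc (h₁ n) (h₂ n),
      empQV U n (1 - lam * h) ω < 1 - h := by
  classical
  set c : ℝ := (1 + lam) / 2 with hc_def
  have hc1 : 1 < c := by rw [hc_def]; linarith
  have hc0 : (0:ℝ) < c := lt_trans one_pos hc1
  have hclam : c < lam := by rw [hc_def]; linarith
  have hratio : 1 < lam / c := (one_lt_div hc0).2 hclam
  set mu : ℝ := Real.sqrt (lam / c) with hmu_def
  have hmu1 : 1 < mu := by
    have h' : Real.sqrt 1 < Real.sqrt (lam / c) := Real.sqrt_lt_sqrt zero_le_one hratio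
    rwa [Real.sqrt_one] at h'
  have hmu0 : (0:ℝ) < mu := lt_trans one_pos hmu1
  have hmusq : mu * mu = lam / c := Real.mul_self_sqrt (by positivity)
  have hlogmu : 0 < Real.log mu := Real.log_pos hmu1
  set dl : ℝ := mu * Real.log mu - mu + 1 with hdl_def
  have hdl : 0 < dl := by
    have hne : mu⁻¹ ≠ 1 := by
      intro hh
      have : mu = 1 := by
        field_simp at hh
        linarith [hh]
      linarith
    have hlog := Real.log_lt_sub_one_of_pos (inv_pos.2 hmu0) hne
    rw [Real.log_inv] at hlog
    have hinv : mu * mu⁻¹ = 1 := mul_inv_cancel₀ (ne_of_gt hmu0)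
    nlinarith [mul_lt_mul_of_pos_left hlog hmu0]
  set sj : ℕ → ℕ → ℝ := fun n j => min (h₁ n * mu ^ (j+1)) (c * h₂ n) with hsj_def
  set Jn : ℕ → ℕ := fun n => ⌈Real.logb mu (c * h₂ n / h₁ n)⌉₊ with hJn_def
  set A : ℕ → ℕ → Set Ω :=
    fun n j => {ω | mu * n * sj n j ≤ (cnt U n (sj n j) ω : ℝ)} with hA_def
  set E : ℕ → Set Ω := fun n => ⋃ j ∈ Finset.range (Jn n + 1), A n j with hE_def
  have h2pos : ∀ n, 0 < h₂ n := fun n => lt_of_lt_of_le (hpos n) (hle n)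
  have hx1 : ∀ n, 1 < c * h₂ n / h₁ n := by
    intro n
    rw [lt_div_iff₀ (hpos n)]
    nlinarith [h2pos n, hle n]
  have hJpos : ∀ n, 0 < Jn n := fun n => Nat.ceil_pos.2 (Real.logb_pos hmu1 (hx1 n))
  have hJgeom : ∀ n, c * h₂ n ≤ h₁ n * mu ^ (Jn n) := by
    intro n
    have hxpos : (0:ℝ) < c * h₂ n / h₁ n := lt_trans one_pos (hx1 n)
    have hlb : c * h₂ n / h₁ n ≤ mu ^ (Jn n) := by
      calc c * h₂ n / h₁ n = mu ^ (Real.logb mu (c * h₂ n / h₁ n)) :=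
            (Real.rpow_logb hmu0 (ne_of_gt hmu1) hxpos).symm
        _ ≤ mu ^ ((Jn n : ℕ) : ℝ) :=
            Real.rpow_le_rpow_of_exponent_le hmu1.le (Nat.le_ceil _)
        _ = mu ^ (Jn n) := by rw [Real.rpow_natCast]
    rw [div_le_iff₀ (hpos n)] at hlb
    linarith [hlb]
  have hs_pos : ∀ n j, 0 < sj n j :=
    fun n j => lt_min (mul_pos (hpos n) (pow_pos hmu0 _)) (mul_pos hc0 (h2pos n))
  have hs_ge : ∀ n j, h₁ n ≤ sj n j := by
    intro n j
    apply le_min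
    · nth_rewrite 1 [← mul_one (h₁ n)]
      exact mul_le_mul_of_nonneg_left (one_le_pow₀ hmu1.le) (hpos n).le
    · calc h₁ n ≤ h₂ n := hle n
        _ ≤ c * h₂ n := le_mul_of_one_le_left (h2pos n).le hc1.le
  have hs_le : ∀ n j, sj n j ≤ c * h₂ n := fun n j => min_le_right _ _
  -- eventual facts
  have F1 : ∀ᶠ n in atTop, c * h₂ n ≤ 1 := by
    have h2to : Tendsto h₂ atTop (nhds 0) := hH12.2.1
    filter_upwards [h2to.eventually_lt_const (show (0:ℝ) < 1/c by positivity)] with n hn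
    have := mul_lt_mul_of_pos_left hn hc0
    rw [mul_one_div, div_self hc0.ne'] at this
    exact this.le
  have hlogto : Tendsto (fun n : ℕ => Real.log n) atTop atTop :=
    Real.tendsto_log_atTop.comp tendsto_natCast_atTop_atTop
  have F3 : ∀ᶠ n : ℕ in atTop,
      4 * Real.log n ≤ dl * ((n:ℝ) * h₁ n) ∧ 1 ≤ (n:ℝ) * h₁ n := by
    filter_upwards [hH31.eventually_ge_atTop (4/dl + 1), hlogto.eventually_ge_atTop 1]
      with n ha hb
    have hlogpos : (0:ℝ) < Real.log n := lt_of_lt_of_le one_pos hb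
    rw [le_div_iff₀ hlogpos] at ha
    have h40 : (0:ℝ) ≤ 4/dl := by positivity
    constructor
    · have h1 : 4/dl * Real.log n ≤ (n:ℝ) * h₁ n := by nlinarith
      have h2 : 4 * Real.log n = dl * (4/dl * Real.log n) := by field_simp
      rw [h2]
      exact mul_le_mul_of_nonneg_left h1 hdl.le
    · nlinarith
  -- the probability bound
  have hPE : ∀ᶠ n : ℕ in atTop, P (E n) ≤ ENNReal.ofReal (((n:ℝ)^2)⁻¹) := by
    filter_upwards [F1, F3, eventually_ge_atTop 1,
      (tendsto_natCast_atTop_atTop (R := ℝ)).eventually_ge_atTop (c / Real.log mu + 2)] with n hF1 hF3 hn1 hnK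
    have hn0 : (0:ℝ) < n := by exact_mod_cast hn1
    have hAj : ∀ j, (P (A n j)).toReal ≤ ((n:ℝ)^4)⁻¹ := by
      intro j
      have hch := chernoff_cnt P U hU n (sj n j) (hs_pos n j)
        (le_trans (hs_le n j) hF1) mu hmu1
      rw [← hdl_def] at hch
      refine le_trans hch ?_
      have hns : (n:ℝ) * h₁ n ≤ (n:ℝ) * sj n j :=
        mul_le_mul_of_nonneg_left (hs_ge n j) (Nat.cast_nonneg n)
      calc Real.exp (-dl * ((n:ℝ) * sj n j)) ≤ Real.exp (-dl * ((n:ℝ) * h₁ n)) := by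
            apply Real.exp_le_exp.2; nlinarith
        _ ≤ Real.exp (-(4 * Real.log n)) := Real.exp_le_exp.2 (by linarith [hF3.1])
        _ = ((n:ℝ)^4)⁻¹ := by
            rw [Real.exp_neg]
            congr 1
            rw [show (4:ℝ) * Real.log n = ((4:ℕ):ℝ) * Real.log n by norm_num,
              Real.exp_nat_mul, Real.exp_log hn0]
    have hEbound : (P (E n)).toReal ≤ ((Jn n : ℝ) + 1) * ((n:ℝ)^4)⁻¹ := by
      have hle1 : P (E n) ≤ ∑ j ∈ Finset.range (Jn n + 1), P (A n j) :=
        measure_biUnion_finset_le _ _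
      have hne : ∑ j ∈ Finset.range (Jn n + 1), P (A n j) ≠ ⊤ :=
        (ENNReal.sum_lt_top.mpr (fun j _ => measure_lt_top P _)).ne
      calc (P (E n)).toReal
          ≤ (∑ j ∈ Finset.range (Jn n + 1), P (A n j)).toReal :=
            ENNReal.toReal_mono hne hle1
        _ = ∑ j ∈ Finset.range (Jn n + 1), (P (A n j)).toReal :=
            ENNReal.toReal_sum (fun j _ => measure_ne_top _ _)
        _ ≤ ∑ _j ∈ Finset.range (Jn n + 1), ((n:ℝ)^4)⁻¹ :=
            Finset.sum_le_sum (fun j _ => hAj j)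
        _ = ((Jn n : ℝ) + 1) * ((n:ℝ)^4)⁻¹ := by
            rw [Finset.sum_const, Finset.card_range]
            push_cast
            ring
    have hJbound : ((Jn n : ℝ) + 1) ≤ (c / Real.log mu + 2) * (n:ℝ) := by
      have hxpos : (0:ℝ) < c * h₂ n / h₁ n := lt_trans one_pos (hx1 n)
      have hlogb0 : 0 ≤ Real.logb mu (c * h₂ n / h₁ n) :=
        (Real.logb_pos hmu1 (hx1 n)).le
      have hceil : (Jn n : ℝ) < Real.logb mu (c * h₂ n / h₁ n) + 1 := by
        simp only [hJn_def]
        exact Nat.ceil_lt_add_one hlogb0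
      have hxle : c * h₂ n / h₁ n ≤ c * n := by
        rw [div_le_iff₀ (hpos n)]
        nlinarith [hF3.2, hc0, (hlt n).le]
      have hlogble : Real.logb mu (c * h₂ n / h₁ n) ≤ c * n / Real.log mu := by
        rw [Real.logb]
        have hlogx : Real.log (c * h₂ n / h₁ n) ≤ c * n := by
          linarith [Real.log_le_sub_one_of_pos hxpos, hxle]
        exact div_le_div_of_nonneg_right hlogx hlogmu.le
      have hn1' : (1:ℝ) ≤ n := by exact_mod_cast hn1
      have hKn : (c / Real.log mu + 2) * (n:ℝ) = c * n / Real.log mu + 2 * n := by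
        field_simp
      have step1 : (Jn n : ℝ) + 1 < Real.logb mu (c * h₂ n / h₁ n) + 2 := by
        linarith [hceil]
      have step2 : Real.logb mu (c * h₂ n / h₁ n) + 2 ≤ c * ↑n / Real.log mu + 2 := by
        linarith [hlogble]
      have step3 : c * ↑n / Real.log mu + 2 ≤ c * ↑n / Real.log mu + 2 * ↑n := by
        linarith [hn1']
      linarith [step1, step2, step3, hKn]
    rw [ENNReal.le_ofReal_iff_toReal_le (measure_ne_top _ _) (by positivity)]
    have hKnsq : (c / Real.log mu + 2) * (n:ℝ) ≤ (n:ℝ)^2 := by nlinarith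
    calc (P (E n)).toReal ≤ ((Jn n:ℝ)+1) * ((n:ℝ)^4)⁻¹ := hEbound
      _ ≤ ((c / Real.log mu + 2) * (n:ℝ)) * ((n:ℝ)^4)⁻¹ :=
          mul_le_mul_of_nonneg_right hJbound (by positivity)
      _ ≤ (n:ℝ)^2 * ((n:ℝ)^4)⁻¹ :=
          mul_le_mul_of_nonneg_right hKnsq (by positivity)
      _ = ((n:ℝ)^2)⁻¹ := by
          field_simp
  -- Borel-Cantelli
  obtain ⟨N, hN⟩ := eventually_atTop.1 hPE
  have htsum : ∑' n, P (E n) ≠ ⊤ := by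
    rw [← Summable.sum_add_tsum_nat_add' (f := fun n => P (E n)) (k := N) ENNReal.summable]
    apply ENNReal.add_ne_top.2
    constructor
    · exact (ENNReal.sum_lt_top.mpr (fun j _ => measure_lt_top P _)).ne
    · have hbase : Summable (fun n : ℕ => ((n:ℝ)^2)⁻¹) := by
        simpa [one_div] using Real.summable_one_div_nat_pow.mpr one_lt_two
      have htail : Summable (fun i : ℕ => ((((i + N : ℕ)):ℝ)^2)⁻¹) :=
        (summable_nat_add_iff N).mpr hbase
      have hfin : ∑' i : ℕ, P (E (i + N)) < ⊤ := by
        calc ∑' i : ℕ, P (E (i + N))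
            ≤ ∑' i : ℕ, ENNReal.ofReal (((((i + N : ℕ)):ℝ)^2)⁻¹) :=
              ENNReal.tsum_le_tsum (fun i => hN (i + N) (Nat.le_add_left N i))
          _ = ENNReal.ofReal (∑' i : ℕ, ((((i + N : ℕ)):ℝ)^2)⁻¹) :=
              (ENNReal.ofReal_tsum_of_nonneg (fun i => by positivity) htail).symm
          _ < ⊤ := ENNReal.ofReal_lt_top
      exact hfin.ne
  have hae := MeasureTheory.ae_eventually_notMem (μ := P) (s := E) htsum
  filter_upwards [hae] with ω hω
  filter_upwards [hω, F1, eventually_ge_atTop 1] with n hnot hch2 hn1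
  intro h hmem
  refine det_step U n hn1 ω lam c mu (h₁ n) (h₂ n) (Jn n) hc1 hmusq hmu1
    (hpos n) (hle n) hch2 (hJgeom n) (hJpos n) ?_ h hmem.1 hmem.2
  intro j hj
  have hnotA : ω ∉ A n j := by
    intro hA
    exact hnot (Set.mem_biUnion (Finset.mem_range.2 (Nat.lt_succ_of_lt hj)) hA)
  have : ¬ (mu * (n:ℝ) * sj n j ≤ (cnt U n (sj n j) ω : ℝ)) := hnotA
  exact not_le.mp this
end
end

section
/- Let {h'_n}_{n≥1} and {h''_n}_{n≥1} be non-random sequences with 0 < h'_n ≤ h''_n < 1 such that each of {h'_n} and {h''_n} satisfies (H.1), (H.2), (H.3). Then, for any fixed λ > 1, with probability one, lim_{n→∞} sup_{h∈[h'_n,h''_n]} (V_n(1 − λh) − (1 − h))/h = 1 − λ. -/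
open MeasureTheory Filter Set Asymptotics
open scoped Classical

noncomputable section

section AuxProof

open Real ProbabilityTheory

variable {Ω : Type*} [MeasurableSpace Ω]

lemma empDF_mono (U : ℕ → Ω → ℝ) (n : ℕ) (ω : Ω) :
    Monotone (fun x => empDF U n x ω) := by
  intro x y hxy
  unfold empDF
  dsimp only
  have hcard : ((((Finset.range n).filter (fun i => U i ω ≤ x)).card : ℝ))
      ≤ (((Finset.range n).filter (fun i => U i ω ≤ y)).card : ℝ) := by
    exact_mod_cast Finset.card_le_card
      (Finset.monotone_filter_right _ (fun i _ hi => le_trans hi hxy))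
  have h2 : (0:ℝ) ≤ ((n:ℝ))⁻¹ := by positivity
  rw [div_eq_mul_inv, div_eq_mul_inv]
  exact mul_le_mul_of_nonneg_right hcard h2

lemma empQV_le_of (U : ℕ → Ω → ℝ) {n : ℕ} {t δ : ℝ} {ω : Ω}
    (h0 : 0 ≤ t + δ) (hup : t ≤ empDF U n (t + δ) ω) :
    empQV U n t ω ≤ t + δ :=
  csInf_le ⟨0, fun _ hu => hu.1⟩ ⟨h0, hup⟩

lemma le_empQV_of (U : ℕ → Ω → ℝ) {n : ℕ} {t δ δ' : ℝ} {ω : Ω}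
    (h0 : 0 ≤ t + δ) (hup : t ≤ empDF U n (t + δ) ω)
    (hlo : empDF U n (t - δ') ω < t) :
    t - δ' ≤ empQV U n t ω := by
  refine le_csInf ⟨t + δ, h0, hup⟩ ?_
  rintro u ⟨_, hu⟩
  by_contra hc
  push_neg at hc
  exact absurd (hu.trans (empDF_mono U n ω hc.le)) (not_le.mpr hlo)

lemma exp_sub_one_sub_le {x : ℝ} (hx : |x| ≤ 1) : Real.exp x - 1 - x ≤ x ^ 2 := by
  have h := Real.exp_bound hx (by norm_num : 0 < 2)
  simp only [Finset.sum_range_succ, Finset.sum_range_zero, pow_zero, pow_one,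
    Nat.factorial] at h
  rw [abs_le] at h
  nlinarith [sq_abs x, h.2, h.1]

lemma mgf_indicator {P : Measure Ω} [IsProbabilityMeasure P] {A : Set Ω}
    (hA : MeasurableSet A) (t : ℝ) :
    mgf (fun ω => if ω ∈ A then (1:ℝ) else 0) P t
      = 1 + (P A).toReal * (Real.exp t - 1) := by
  have hfun : (fun ω => Real.exp (t * (if ω ∈ A then (1:ℝ) else 0)))
      = fun ω => A.indicator (fun _ => Real.exp t - 1) ω + 1 := by
    funext ω
    by_cases h : ω ∈ A <;> simp [h]
  unfold mgf
  rw [hfun, MeasureTheory.integral_add ((MeasureTheory.integrable_const _).indicator hA)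
    (MeasureTheory.integrable_const 1)]
  rw [MeasureTheory.integral_indicator_const _ hA, MeasureTheory.integral_const]
  simp only [smul_eq_mul, MeasureTheory.measureReal_def, MeasureTheory.measure_univ, ENNReal.toReal_one, mul_one]
  ring

lemma sandwich_lower (Fs F1 sg1 s eta D lam ε : ℝ)
    (hgb1 : -(ε * (1 - sg1) / (32 * lam)) ≤ F1 - sg1)
    (htol2 : ε * (1 - sg1) / (32 * lam) ≤ 2 * D)
    (hskd2 : s - sg1 ≤ eta) (hFge : F1 ≤ Fs)
    (hη1s : eta ≤ D) (hD0 : 0 ≤ D) :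
    -(4 * D) ≤ Fs - s := by
  linarith only [hgb1, htol2, hskd2, hFge, hη1s, hD0]

lemma sandwich_upper (Fs Fk sgk s eta D lam ε : ℝ)
    (hga2 : Fk - sgk ≤ ε * (1 - sgk) / (32 * lam))
    (htol1 : ε * (1 - sgk) / (32 * lam) ≤ D)
    (hskd : sgk - s ≤ eta) (hFle : Fs ≤ Fk)
    (hη1s : eta ≤ D) (hD0 : 0 ≤ D) :
    Fs - s ≤ 4 * D := by
  linarith only [hga2, htol1, hskd, hFle, hη1s, hD0]

end AuxProof
section AuxProof2

open Real ProbabilityTheory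
open scoped ENNReal

variable {Ω : Type*} [MeasurableSpace Ω]

lemma binom_tail {P : Measure Ω} [IsProbabilityMeasure P] {U : ℕ → Ω → ℝ}
    (hU : IsUniformSample P U) (n : ℕ) {s δ t : ℝ} (hs0 : 0 ≤ s) (hs1 : s ≤ 1)
    (ht0 : 0 < t) (ht1 : t ≤ 1) :
    P {ω | δ < |empDF U n s ω - s|}
      ≤ ENNReal.ofReal (2 * Real.exp ((n:ℝ) * (1 - s) * t ^ 2 - t * ((n:ℝ) * δ))) := by
  classical
  rcases Nat.eq_zero_or_pos n with hn | hn
  · subst hn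
    simp only [Nat.cast_zero, zero_mul, mul_zero, zero_sub, neg_zero, Real.exp_zero, mul_one]
    calc P {ω | δ < |empDF U 0 s ω - s|} ≤ 1 := prob_le_one
      _ ≤ ENNReal.ofReal 2 := by
          rw [show (1:ℝ≥0∞) = ENNReal.ofReal 1 by simp]
          exact ENNReal.ofReal_le_ofReal (by norm_num)
  have hn0 : (0:ℝ) < n := by exact_mod_cast hn
  set q : ℝ := 1 - s with hq
  have hq0 : 0 ≤ q := by simp only [hq]; linarith
  have hq1 : q ≤ 1 := by simp only [hq]; linarith
  set g : ℝ → ℝ := fun x => if s < x then 1 else 0 with hg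
  have hgmeas : Measurable g :=
    Measurable.ite (measurableSet_lt measurable_const measurable_id)
      measurable_const measurable_const
  set X : ℕ → Ω → ℝ := fun i => g ∘ U i with hX
  have hXmeas : ∀ i, Measurable (X i) := fun i => hgmeas.comp (hU.1 i)
  have hindep : ProbabilityTheory.iIndepFun X P :=
    hU.2.1.comp (fun _ => g) (fun _ => hgmeas)
  have hmeasA : ∀ i : ℕ, P {ω | s < U i ω} = ENNReal.ofReal q := by
    intro i
    have h1 : {ω | s < U i ω} = {ω | U i ω ≤ s}ᶜ := by ext ω; simp [not_le]
    rw [h1, measure_compl (measurableSet_le (hU.1 i) measurable_const) (measure_ne_top _ _),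
      hU.2.2 i s ⟨hs0, hs1⟩]
    rw [hq, ENNReal.ofReal_sub _ hs0, ENNReal.ofReal_one, measure_univ]
  have hmgfX : ∀ (i : ℕ) (τ : ℝ), mgf (X i) P τ = 1 + q * (Real.exp τ - 1) := by
    intro i τ
    have hXi : X i = fun ω => if ω ∈ {ω | s < U i ω} then (1:ℝ) else 0 := rfl
    rw [hXi, mgf_indicator (measurableSet_lt measurable_const (hU.1 i)) τ, hmeasA i,
      ENNReal.toReal_ofReal hq0]
  set S : Ω → ℝ := fun ω => ∑ i ∈ Finset.range n, X i ω with hS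
  have hSsum : S = ∑ i ∈ Finset.range n, X i := by
    funext ω; rw [hS]; simp [Finset.sum_apply]
  have hSmeas : Measurable S := by
    rw [hS]; exact Finset.measurable_sum _ (fun i _ => hXmeas i)
  have hmgfS : ∀ τ : ℝ, mgf S P τ = (1 + q * (Real.exp τ - 1)) ^ n := by
    intro τ
    rw [hSsum, hindep.mgf_sum hXmeas]
    rw [Finset.prod_congr rfl (fun i _ => hmgfX i τ), Finset.prod_const, Finset.card_range]
  have hbase : ∀ τ : ℝ, mgf S P τ ≤ Real.exp ((n:ℝ) * (q * (Real.exp τ - 1))) := by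
    intro τ
    rw [hmgfS, Real.exp_nat_mul]
    refine pow_le_pow_left₀ ?_ ?_ n
    · nlinarith [Real.exp_nonneg τ]
    · linarith [Real.add_one_le_exp (q * (Real.exp τ - 1))]
  have hSbd : ∀ ω, 0 ≤ S ω ∧ S ω ≤ n := by
    intro ω
    constructor
    · exact Finset.sum_nonneg (fun i _ => by by_cases h : s < U i ω <;> simp [hX, hg, h])
    · calc S ω ≤ ∑ _i ∈ Finset.range n, (1:ℝ) := by
            refine Finset.sum_le_sum (fun i _ => ?_)
            by_cases h : s < U i ω <;> simp [hX, hg, h]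
        _ = n := by simp
  have hint : ∀ τ : ℝ, MeasureTheory.Integrable (fun ω => Real.exp (τ * S ω)) P := by
    intro τ
    refine MeasureTheory.Integrable.mono' (MeasureTheory.integrable_const
      (Real.exp (|τ| * n))) ((hSmeas.const_mul τ).exp.aestronglyMeasurable)
      (MeasureTheory.ae_of_all _ (fun ω => ?_))
    rw [Real.norm_eq_abs, Real.abs_exp]
    apply Real.exp_le_exp.mpr
    calc τ * S ω ≤ |τ| * S ω := mul_le_mul_of_nonneg_right (le_abs_self τ) (hSbd ω).1
      _ ≤ |τ| * n := mul_le_mul_of_nonneg_left (hSbd ω).2 (abs_nonneg τ)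
  have hexpb : Real.exp t - 1 - t ≤ t ^ 2 :=
    exp_sub_one_sub_le (abs_le.mpr ⟨by linarith, ht1⟩)
  have hexpb' : Real.exp (-t) - 1 + t ≤ t ^ 2 := by
    have := exp_sub_one_sub_le (x := -t) (abs_le.mpr ⟨by linarith, by linarith⟩)
    nlinarith [this]
  have key1 : (P {ω | (n:ℝ) * q + (n:ℝ) * δ ≤ S ω}).toReal
      ≤ Real.exp ((n:ℝ) * q * t ^ 2 - t * ((n:ℝ) * δ)) := by
    refine (measure_ge_le_exp_mul_mgf ((n:ℝ)*q + (n:ℝ)*δ) ht0.le (hint t)).trans ?_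
    calc Real.exp (-t * ((n:ℝ)*q + (n:ℝ)*δ)) * mgf S P t
        ≤ Real.exp (-t * ((n:ℝ)*q + (n:ℝ)*δ)) * Real.exp ((n:ℝ)*(q*(Real.exp t - 1))) :=
          mul_le_mul_of_nonneg_left (hbase t) (Real.exp_nonneg _)
      _ = Real.exp ((n:ℝ)*q*(Real.exp t - 1 - t) - t*((n:ℝ)*δ)) := by
          rw [← Real.exp_add]; congr 1; ring
      _ ≤ Real.exp ((n:ℝ) * q * t ^ 2 - t * ((n:ℝ) * δ)) := by
          apply Real.exp_le_exp.mpr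
          have h1 : (n:ℝ)*q*(Real.exp t - 1 - t) ≤ (n:ℝ)*q*t^2 :=
            mul_le_mul_of_nonneg_left hexpb (by positivity)
          linarith
  have key2 : (P {ω | (n:ℝ) * δ - (n:ℝ) * q ≤ -S ω}).toReal
      ≤ Real.exp ((n:ℝ) * q * t ^ 2 - t * ((n:ℝ) * δ)) := by
    have hint' : MeasureTheory.Integrable (fun ω => Real.exp (t * (-S) ω)) P := by
      have := hint (-t)
      simpa [neg_mul, mul_neg] using this
    have h := measure_ge_le_exp_mul_mgf (X := -S) ((n:ℝ)*δ - (n:ℝ)*q) ht0.le hint'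
    refine h.trans ?_
    rw [mgf_neg]
    calc Real.exp (-t * ((n:ℝ)*δ - (n:ℝ)*q)) * mgf S P (-t)
        ≤ Real.exp (-t * ((n:ℝ)*δ - (n:ℝ)*q)) * Real.exp ((n:ℝ)*(q*(Real.exp (-t) - 1))) :=
          mul_le_mul_of_nonneg_left (hbase (-t)) (Real.exp_nonneg _)
      _ = Real.exp ((n:ℝ)*q*(Real.exp (-t) - 1 + t) - t*((n:ℝ)*δ)) := by
          rw [← Real.exp_add]; congr 1; ring
      _ ≤ Real.exp ((n:ℝ) * q * t ^ 2 - t * ((n:ℝ) * δ)) := by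
          apply Real.exp_le_exp.mpr
          have h1 : (n:ℝ)*q*(Real.exp (-t) - 1 + t) ≤ (n:ℝ)*q*t^2 :=
            mul_le_mul_of_nonneg_left hexpb' (by positivity)
          linarith
  have hevent : {ω | δ < |empDF U n s ω - s|}
      ⊆ {ω | (n:ℝ)*q + (n:ℝ)*δ ≤ S ω} ∪ {ω | (n:ℝ)*δ - (n:ℝ)*q ≤ -S ω} := by
    intro ω hω
    simp only [Set.mem_setOf_eq] at hω
    have hninv : (n:ℝ) * (n:ℝ)⁻¹ = 1 := mul_inv_cancel₀ (ne_of_gt hn0)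
    have hid : empDF U n s ω - s = q - S ω * (n:ℝ)⁻¹ := by
      have h1 : S ω = (((Finset.range n).filter (fun i => s < U i ω)).card : ℝ) := by
        rw [hS]
        exact_mod_cast Finset.sum_boole (fun i => s < U i ω) (Finset.range n)
      have h2 : (((Finset.range n).filter (fun i => U i ω ≤ s)).card : ℝ)
          = (n:ℝ) - S ω := by
        have h3 := Finset.card_filter_add_card_filter_not
          (s := Finset.range n) (p := fun i => U i ω ≤ s)
        have h4 : (Finset.range n).filter (fun i => ¬ U i ω ≤ s)
            = (Finset.range n).filter (fun i => s < U i ω) := by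
          apply Finset.filter_congr; intro i _; simp [not_le]
        rw [h4, Finset.card_range] at h3
        have h5 : (((Finset.range n).filter (fun i => U i ω ≤ s)).card : ℝ)
            + (((Finset.range n).filter (fun i => s < U i ω)).card : ℝ) = (n:ℝ) := by
          exact_mod_cast congrArg (Nat.cast (R := ℝ)) h3
        rw [h1]; linarith
      unfold empDF
      rw [h2, hq]
      field_simp
      ring
    rw [hid] at hω
    have hexp : (n:ℝ)*(q - S ω * (n:ℝ)⁻¹) = (n:ℝ)*q - S ω := by
      field_simp
    rcases lt_abs.mp hω with h | h
    · right
      simp only [Set.mem_setOf_eq, Pi.neg_apply]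
      have h' := mul_lt_mul_of_pos_left h hn0
      rw [hexp] at h'
      linarith
    · left
      simp only [Set.mem_setOf_eq]
      have h' := mul_lt_mul_of_pos_left h hn0
      have hexp2 : (n:ℝ)*(-(q - S ω * (n:ℝ)⁻¹)) = S ω - (n:ℝ)*q := by
        field_simp; ring
      rw [hexp2] at h'
      linarith
  calc P {ω | δ < |empDF U n s ω - s|}
      ≤ P ({ω | (n:ℝ)*q + (n:ℝ)*δ ≤ S ω} ∪ {ω | (n:ℝ)*δ - (n:ℝ)*q ≤ -S ω}) :=
        measure_mono hevent
    _ ≤ P {ω | (n:ℝ)*q + (n:ℝ)*δ ≤ S ω} + P {ω | (n:ℝ)*δ - (n:ℝ)*q ≤ -S ω} :=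
        measure_union_le _ _
    _ ≤ ENNReal.ofReal (Real.exp ((n:ℝ)*q*t^2 - t*((n:ℝ)*δ)))
        + ENNReal.ofReal (Real.exp ((n:ℝ)*q*t^2 - t*((n:ℝ)*δ))) := by
        gcongr
        · exact (ENNReal.le_ofReal_iff_toReal_le (measure_ne_top _ _)
            (Real.exp_nonneg _)).mpr key1
        · exact (ENNReal.le_ofReal_iff_toReal_le (measure_ne_top _ _)
            (Real.exp_nonneg _)).mpr key2
    _ = ENNReal.ofReal (2 * Real.exp ((n:ℝ)*(1-s)*t^2 - t*((n:ℝ)*δ))) := by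
        rw [← ENNReal.ofReal_add (Real.exp_nonneg _) (Real.exp_nonneg _)]
        congr 1
        rw [hq]; ring

end AuxProof2
section AuxProof3

open Real ProbabilityTheory
open scoped ENNReal

variable {Ω : Type*} [MeasurableSpace Ω]

set_option maxHeartbeats 1000000 in
lemma main_eps {P : Measure Ω} [IsProbabilityMeasure P] {U : ℕ → Ω → ℝ}
    (hU : IsUniformSample P U) (h₁ h₂ : ℕ → ℝ)
    (hpos : ∀ n, 0 < h₁ n) (hle : ∀ n, h₁ n ≤ h₂ n) (hlt : ∀ n, h₂ n < 1)
    (hb0 : Filter.Tendsto h₂ Filter.atTop (nhds 0))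
    (hna : Filter.Tendsto (fun n : ℕ => (n : ℝ) * h₁ n) Filter.atTop Filter.atTop)
    (hH31 : H3 h₁) (lam ε : ℝ) (hlam : 1 < lam)
    (hε0 : 0 < ε) (hε1 : ε ≤ 1) (hel : ε ≤ (lam - 1) / 2) :
    ∀ᵐ ω ∂P, ∀ᶠ n in Filter.atTop, ∀ h : ℝ, h₁ n ≤ h → h ≤ h₂ n →
      |empQV U n (1 - lam * h) ω - (1 - lam * h)| ≤ ε * h := by
  classical
  have hlam0 : 0 < lam := by linarith
  have hlme1 : 1 ≤ lam - ε := by linarith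
  set t : ℝ := ε / (64 * lam) with htdef
  have ht0 : 0 < t := by positivity
  have ht1 : t ≤ 1 := by
    rw [htdef, div_le_one (by positivity)]; nlinarith
  set η : ℕ → ℝ := fun n => ε * h₁ n / (32 * lam) with hηdef
  have hη0 : ∀ n, 0 < η n := fun n => by
    have := hpos n; rw [hηdef]; positivity
  have hηa : ∀ n, η n ≤ h₁ n := by
    intro n
    rw [hηdef]
    rw [div_le_iff₀ (by positivity)]
    nlinarith [hpos n]
  set K : ℕ → ℕ := fun n => ⌈(lam + ε) * h₂ n / η n⌉₊ with hKdef
  set sg : ℕ → ℕ → ℝ := fun n k => 1 - (lam - ε) * h₁ n - k * η n with hsgdef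
  set B : ℕ → Set Ω := fun n => ⋃ k ∈ Finset.range (K n + 1),
    {ω | ε * (1 - sg n k) / (32 * lam) < |empDF U n (sg n k) ω - sg n k|} with hBdef
  set C : ℝ := (lam + 1) * 32 * lam / ε + 2 with hCdef
  have hC0 : 0 < C := by rw [hCdef]; positivity
  -- eventual conditions
  have hcond : ∀ᶠ n in Filter.atTop, ((2*lam + 3) * h₂ n ≤ 1/2)
      ∧ (4 * Real.log n ≤ t^2 * ((n:ℝ) * h₁ n))
      ∧ (1 ≤ (n:ℝ) * h₁ n) ∧ (2 * C ≤ (n:ℝ)) ∧ 1 ≤ n := by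
    have e1 : ∀ᶠ n in Filter.atTop, (2*lam + 3) * h₂ n ≤ 1/2 := by
      have hc0 : (0:ℝ) < (1/2) / (2*lam+3) := by positivity
      filter_upwards [hb0.eventually_lt_const hc0] with n hn
      rw [lt_div_iff₀ (by positivity)] at hn
      linarith
    have e2 : ∀ᶠ n : ℕ in Filter.atTop, 4 * Real.log n ≤ t^2 * ((n:ℝ) * h₁ n) := by
      have h4 : (0:ℝ) < t^2 := by positivity
      filter_upwards [hH31.eventually_ge_atTop (4/t^2), Filter.eventually_gt_atTop 2]
        with n hn1 hn2
      have hn2' : (2:ℝ) < (n:ℝ) := by exact_mod_cast hn2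
      have hlogpos : 0 < Real.log n := Real.log_pos (by linarith)
      rw [div_le_div_iff₀ h4 hlogpos] at hn1
      linarith [hn1]
    have e3 : ∀ᶠ n : ℕ in Filter.atTop, 1 ≤ (n:ℝ) * h₁ n := hna.eventually_ge_atTop 1
    have e4 : ∀ᶠ n : ℕ in Filter.atTop, 2 * C ≤ (n:ℝ) :=
      tendsto_natCast_atTop_atTop.eventually_ge_atTop (2*C)
    have e5 : ∀ᶠ n in Filter.atTop, 1 ≤ n := Filter.eventually_ge_atTop 1
    filter_upwards [e1, e2, e3, e4, e5] with n a1 a2 a3 a4 a5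
    exact ⟨a1, a2, a3, a4, a5⟩
  -- measure bound per n
  have hPB : ∀ n : ℕ, ((2*lam + 3) * h₂ n ≤ 1/2)
      → (4 * Real.log n ≤ t^2 * ((n:ℝ) * h₁ n))
      → (1 ≤ (n:ℝ) * h₁ n) → (2 * C ≤ (n:ℝ)) → 1 ≤ n
      → P (B n) ≤ ENNReal.ofReal (1 / (n:ℝ)^2) := by
    intro n hc1 hc2 hc3 hc4 hc5
    have hn0 : (0:ℝ) < n := by exact_mod_cast hc5
    have ha0 : 0 < h₁ n := hpos n
    have hb1 : h₂ n ≤ 1 := (hlt n).le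
    have hb0' : 0 < h₂ n := lt_of_lt_of_le (hpos n) (hle n)
    have hKb : (K n : ℝ) ≤ (lam + ε) * h₂ n / η n + 1 :=
      le_of_lt (Nat.ceil_lt_add_one (div_nonneg (by nlinarith) (hη0 n).le))
    have hKη : (K n : ℝ) * η n ≤ (lam + ε) * h₂ n + η n := by
      have := mul_le_mul_of_nonneg_right hKb (hη0 n).le
      rwa [add_mul, one_mul, div_mul_cancel₀ _ (ne_of_gt (hη0 n))] at this
    have hsk : ∀ k, k ≤ K n → 0 ≤ sg n k ∧ sg n k ≤ 1 ∧ h₁ n ≤ 1 - sg n k := by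
      intro k hk
      have hkη : (k:ℝ) * η n ≤ (K n:ℝ) * η n := by
        apply mul_le_mul_of_nonneg_right _ (hη0 n).le
        exact_mod_cast hk
      have hη2 : η n ≤ h₂ n := (hηa n).trans (hle n)
      have h12 : (lam - ε) * h₁ n ≤ lam * h₂ n := by
        have h1' : h₁ n ≤ h₂ n := hle n
        nlinarith [hpos n]
      have hk0 : (0:ℝ) ≤ (k:ℝ) * η n := by positivity
      refine ⟨?_, ?_, ?_⟩
      · simp only [hsgdef]
        nlinarith [hc1, hle n]
      · simp only [hsgdef]
        nlinarith [hpos n]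
      · simp only [hsgdef]
        nlinarith [hpos n]
    have hpoint : ∀ k, k ≤ K n →
        P {ω | ε * (1 - sg n k) / (32 * lam) < |empDF U n (sg n k) ω - sg n k|}
          ≤ ENNReal.ofReal (2 * Real.exp (-(t^2) * ((n:ℝ) * h₁ n))) := by
      intro k hk
      obtain ⟨hs0, hs1, hsa⟩ := hsk k hk
      refine (binom_tail hU n hs0 hs1 ht0 ht1).trans (ENNReal.ofReal_le_ofReal ?_)
      have hδ : ε * (1 - sg n k) / (32 * lam) = 2 * t * (1 - sg n k) := by
        rw [htdef]; field_simp; ring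
      rw [hδ]
      apply mul_le_mul_of_nonneg_left _ (by norm_num : (0:ℝ) ≤ 2)
      apply Real.exp_le_exp.mpr
      have hmono : (n:ℝ) * t^2 * h₁ n ≤ (n:ℝ) * t^2 * (1 - sg n k) :=
        mul_le_mul_of_nonneg_left hsa (by positivity)
      nlinarith [hmono]
    have hunion : P (B n) ≤ (K n + 1 : ℕ) *
        ENNReal.ofReal (2 * Real.exp (-(t^2) * ((n:ℝ) * h₁ n))) := by
      rw [hBdef]
      refine (measure_biUnion_finset_le _ _).trans ?_
      calc ∑ k ∈ Finset.range (K n + 1),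
            P {ω | ε * (1 - sg n k) / (32 * lam) < |empDF U n (sg n k) ω - sg n k|}
          ≤ ∑ _k ∈ Finset.range (K n + 1),
            ENNReal.ofReal (2 * Real.exp (-(t^2) * ((n:ℝ) * h₁ n))) :=
            Finset.sum_le_sum (fun k hk => hpoint k (Nat.lt_succ_iff.mp (Finset.mem_range.mp hk)))
        _ = (K n + 1 : ℕ) * ENNReal.ofReal (2 * Real.exp (-(t^2) * ((n:ℝ) * h₁ n))) := by
            rw [Finset.sum_const, Finset.card_range, nsmul_eq_mul]
    refine hunion.trans ?_
    rw [← ENNReal.ofReal_natCast (K n + 1), ← ENNReal.ofReal_mul (by positivity)]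
    apply ENNReal.ofReal_le_ofReal
    -- real arithmetic: (K+1) * (2 exp(-t² n a)) ≤ 1/n²
    have hK1 : ((K n + 1 : ℕ) : ℝ) ≤ C * n := by
      push_cast
      have h1a : 1 / h₁ n ≤ (n:ℝ) := by
        rw [div_le_iff₀ ha0]; linarith [hc3]
      have hKb2 : (lam + ε) * h₂ n / η n ≤ (lam + 1) * 32 * lam / ε * (1 / h₁ n) := by
        rw [hηdef, div_le_iff₀ (by positivity)]
        have expand : (lam + 1) * 32 * lam / ε * (1 / h₁ n) * (ε * h₁ n / (32 * lam))
            = (lam + 1) := by field_simp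
        rw [expand]
        nlinarith [hpos n, hle n]
      have : (lam + 1) * 32 * lam / ε * (1 / h₁ n) ≤ (lam + 1) * 32 * lam / ε * (n:ℝ) := by
        apply mul_le_mul_of_nonneg_left h1a (by positivity)
      have hCn : C * (n:ℝ) = (lam + 1) * 32 * lam / ε * (n:ℝ) + 2 * (n:ℝ) := by
        rw [hCdef]; ring
      have hn1 : (1:ℝ) ≤ (n:ℝ) := by exact_mod_cast hc5
      calc ((K n:ℝ) + 1) ≤ ((lam + ε) * h₂ n / η n + 1) + 1 := by linarith [hKb]
        _ ≤ (lam + 1) * 32 * lam / ε * (1 / h₁ n) + 2 := by linarith [hKb2]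
        _ ≤ (lam + 1) * 32 * lam / ε * (n:ℝ) + 2 := by linarith [this]
        _ ≤ (lam + 1) * 32 * lam / ε * (n:ℝ) + 2 * (n:ℝ) := by linarith [hn1]
        _ = C * (n:ℝ) := hCn.symm
    have hexp4 : Real.exp (-(t^2) * ((n:ℝ) * h₁ n)) ≤ 1 / (n:ℝ)^4 := by
      have h1 : Real.exp (-(t^2) * ((n:ℝ) * h₁ n)) ≤ Real.exp (-(4 * Real.log n)) := by
        apply Real.exp_le_exp.mpr; nlinarith [hc2]
      refine h1.trans ?_
      rw [Real.exp_neg]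
      rw [show (4:ℝ) * Real.log n = ((4:ℕ):ℝ) * Real.log n by norm_num,
        Real.exp_nat_mul, Real.exp_log hn0]
      rw [one_div]
    calc ((K n + 1 : ℕ) : ℝ) * (2 * Real.exp (-(t^2) * ((n:ℝ) * h₁ n)))
        ≤ (C * n) * (2 * (1 / (n:ℝ)^4)) := by
          apply mul_le_mul hK1 _ (by positivity) (by positivity)
          exact mul_le_mul_of_nonneg_left hexp4 (by norm_num)
      _ ≤ 1 / (n:ℝ)^2 := by
          have hre : (C*(n:ℝ))*(2*(1/(n:ℝ)^4)) = (2*C*(n:ℝ))/(n:ℝ)^4 := by ring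
          rw [hre, div_le_div_iff₀ (by positivity) (by positivity)]
          have hmul := mul_le_mul_of_nonneg_right hc4 (pow_nonneg hn0.le 3)
          nlinarith [hmul, hn0]
  -- Borel-Cantelli
  obtain ⟨N, hN⟩ := Filter.eventually_atTop.mp hcond
  set T : ℕ → Set Ω := fun n => if N ≤ n then B n else ∅ with hT
  have hsum : (∑' n, P (T n)) ≠ ⊤ := by
    have hle' : ∀ n, P (T n) ≤ ENNReal.ofReal (1/(n:ℝ)^2) := by
      intro n
      by_cases h : N ≤ n
      · simp only [hT, if_pos h]
        obtain ⟨a1, a2, a3, a4, a5⟩ := hN n h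
        exact hPB n a1 a2 a3 a4 a5
      · simp only [hT, if_neg h, measure_empty]
        exact zero_le
    refine ne_top_of_le_ne_top ?_ (ENNReal.tsum_le_tsum hle')
    rw [← ENNReal.ofReal_tsum_of_nonneg (fun n => by positivity)
      (Real.summable_one_div_nat_pow.mpr (by norm_num))]
    exact ENNReal.ofReal_ne_top
  filter_upwards [MeasureTheory.ae_eventually_notMem hsum] with ω hω
  rw [Filter.eventually_atTop] at hω
  obtain ⟨M, hM⟩ := hω
  rw [Filter.eventually_atTop]
  refine ⟨max N M, fun n hn => ?_⟩
  have hnN : N ≤ n := le_trans (le_max_left _ _) hn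
  have hnM : M ≤ n := le_trans (le_max_right _ _) hn
  have hωB : ω ∉ B n := by
    have := hM n hnM
    simpa [hT, if_pos hnN] using this
  obtain ⟨hc1, hc2, hc3, hc4, hc5⟩ := hN n hnN
  have hn0 : (0:ℝ) < n := by exact_mod_cast hc5
  have ha0 : 0 < h₁ n := hpos n
  have hb0' : 0 < h₂ n := lt_of_lt_of_le ha0 (hle n)
  have hb1 : h₂ n ≤ 1 := (hlt n).le
  -- grid control from ω ∉ B n
  have hgood : ∀ k, k ≤ K n →
      |empDF U n (sg n k) ω - sg n k| ≤ ε * (1 - sg n k) / (32 * lam) := by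
    intro k hk
    by_contra hcon
    push_neg at hcon
    exact hωB (Set.mem_biUnion (Finset.mem_range.mpr (Nat.lt_succ_of_le hk)) hcon)
  -- continuum claim
  have hF : ∀ s : ℝ, 1 - (lam + ε) * h₂ n ≤ s → s ≤ 1 - (lam - ε) * h₁ n →
      |empDF U n s ω - s| ≤ ε * (1 - s) / (8 * lam) := by
    intro s hs1 hs2
    set k : ℕ := ⌊(1 - (lam - ε) * h₁ n - s) / η n⌋₊ with hkd
    have hd0 : 0 ≤ 1 - (lam - ε) * h₁ n - s := by linarith
    have hfl : (k:ℝ) * η n ≤ 1 - (lam - ε) * h₁ n - s := by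
      have h1 := Nat.floor_le (div_nonneg hd0 (hη0 n).le)
      have h2 := mul_le_mul_of_nonneg_right h1 (hη0 n).le
      rwa [div_mul_cancel₀ _ (ne_of_gt (hη0 n))] at h2
    have hfl2 : 1 - (lam - ε) * h₁ n - s < ((k:ℝ) + 1) * η n := by
      have h1 := Nat.lt_floor_add_one ((1 - (lam - ε) * h₁ n - s) / η n)
      have h2 := (div_lt_iff₀ (hη0 n)).mp h1
      exact_mod_cast h2
    have hkK : k + 1 ≤ K n := by
      have hxlt : 1 - (lam - ε) * h₁ n - s < (lam + ε) * h₂ n := by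
        nlinarith [mul_pos (show (0:ℝ) < lam - ε by linarith) ha0]
      have hstrict : (1 - (lam - ε) * h₁ n - s) / η n < (lam + ε) * h₂ n / η n := by
        gcongr
      refine Nat.succ_le_of_lt ((Nat.floor_lt (div_nonneg hd0 (hη0 n).le)).mpr ?_)
      exact hstrict.trans_le (Nat.le_ceil _)
    have hg1 := hgood k (le_trans (Nat.le_succ k) hkK)
    have hg2 := hgood (k+1) hkK
    have hsk1 : s ≤ sg n k := by
      simp only [hsgdef]; linarith
    have hsk2 : sg n (k+1) ≤ s := by
      simp only [hsgdef]; push_cast; linarith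
    have hskd : sg n k - s ≤ η n := by
      simp only [hsgdef]; push_cast [hsgdef] at hfl2 ⊢; linarith
    have hskd2 : s - sg n (k+1) ≤ η n := by
      simp only [hsgdef]; push_cast; linarith
    -- atom D
    set D : ℝ := ε * (1 - s) / (32 * lam) with hD
    have h1sa : (lam - ε) * h₁ n ≤ 1 - s := by linarith
    have h1s : h₁ n ≤ 1 - s := by
      have := mul_le_mul_of_nonneg_right hlme1 ha0.le
      rw [one_mul] at this
      linarith
    have hD0 : 0 ≤ D := by
      rw [hD]
      have h0s : (0:ℝ) ≤ 1 - s := le_trans ha0.le h1s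
      positivity
    have hη1s : η n ≤ D := by
      rw [hD]
      have : η n = ε * h₁ n / (32 * lam) := rfl
      rw [this]
      gcongr <;> first | exact h1s | positivity
    have htol1 : ε * (1 - sg n k) / (32 * lam) ≤ D := by
      rw [hD]
      gcongr <;> first | linarith [hsk1, le_trans ha0.le h1s] | positivity
    have htol2 : ε * (1 - sg n (k+1)) / (32 * lam) ≤ 2 * D := by
      have h2s : 1 - sg n (k+1) ≤ 2 * (1 - s) := by
        have := (hηa n).trans h1s
        linarith [hskd2]
      calc ε * (1 - sg n (k+1)) / (32 * lam) ≤ ε * (2 * (1 - s)) / (32 * lam) := by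
            gcongr <;> first | linarith [h2s, le_trans ha0.le h1s] | positivity
        _ = 2 * D := by rw [hD]; ring
    have hFmono := empDF_mono U n ω
    have hFle : empDF U n s ω ≤ empDF U n (sg n k) ω := hFmono hsk1
    have hFge : empDF U n (sg n (k+1)) ω ≤ empDF U n s ω := hFmono hsk2
    have h4D : ε * (1 - s) / (8 * lam) = 4 * D := by rw [hD]; field_simp; ring
    rw [h4D, abs_le]
    have hga := abs_le.mp hg1
    have hgb := abs_le.mp hg2
    constructor
    · exact sandwich_lower _ _ _ _ _ _ _ _ hgb.1 htol2 hskd2 hFge hη1s hD0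
    · exact sandwich_upper _ _ _ _ _ _ _ _ hga.2 htol1 hskd hFle hη1s hD0
  -- conclusion for each h
  intro h hha hhb
  have hh0 : 0 < h := lt_of_lt_of_le ha0 hha
  have hεh0 : 0 < ε * h := by positivity
  have hmul1 : (lam - ε) * h ≤ (lam - ε) * h₂ n := by
    apply mul_le_mul_of_nonneg_left hhb (by linarith)
  have hmul2 : (lam - ε) * h₂ n ≤ (lam + ε) * h₂ n := by
    have : (0:ℝ) ≤ 2 * ε * h₂ n := by positivity
    nlinarith [this]
  have hmul3 : (lam - ε) * h₁ n ≤ (lam - ε) * h := by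
    apply mul_le_mul_of_nonneg_left hha (by linarith)
  have hmul4 : (lam + ε) * h ≤ (lam + ε) * h₂ n := by
    apply mul_le_mul_of_nonneg_left hhb (by linarith)
  have hmul5 : (lam - ε) * h ≤ (lam + ε) * h := by
    have : (0:ℝ) ≤ 2 * ε * h := by positivity
    nlinarith [this]
  have hup : 1 - lam * h ≤ empDF U n ((1 - lam * h) + ε * h) ω := by
    have heq : (1 - lam * h) + ε * h = 1 - (lam - ε) * h := by ring
    rw [heq]
    have hr := hF (1 - (lam - ε) * h) (by linarith) (by linarith)
    have hsimp : 1 - (1 - (lam - ε) * h) = (lam - ε) * h := by ring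
    rw [hsimp] at hr
    have hb : ε * ((lam - ε) * h) / (8 * lam) ≤ ε * h := by
      rw [div_le_iff₀ (by positivity)]
      nlinarith [mul_nonneg (show (0:ℝ) ≤ 7*lam + ε by linarith) hεh0.le]
    have := (abs_le.mp hr).1
    linarith
  have h0' : 0 ≤ (1 - lam * h) + ε * h := by
    have hm6 : lam * h ≤ lam * h₂ n := mul_le_mul_of_nonneg_left hhb hlam0.le
    have hm7 : lam * h₂ n ≤ (2*lam + 3) * h₂ n := by
      apply mul_le_mul_of_nonneg_right (by linarith) hb0'.le
    linarith [hεh0.le]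
  have hlo : empDF U n ((1 - lam * h) - ε * h) ω < 1 - lam * h := by
    have heq : (1 - lam * h) - ε * h = 1 - (lam + ε) * h := by ring
    rw [heq]
    have hr := hF (1 - (lam + ε) * h) (by linarith) (by linarith)
    have hsimp : 1 - (1 - (lam + ε) * h) = (lam + ε) * h := by ring
    rw [hsimp] at hr
    have hb : ε * ((lam + ε) * h) / (8 * lam) ≤ ε * h / 2 := by
      rw [div_le_div_iff₀ (by positivity) (by norm_num)]
      nlinarith [mul_nonneg (show (0:ℝ) ≤ 2*lam - ε by linarith) hεh0.le]
    have := (abs_le.mp hr).2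
    linarith [hεh0]
  have hq1 := empQV_le_of U h0' hup
  have hq2 := le_empQV_of U h0' hup hlo
  rw [abs_le]
  constructor <;> linarith

end AuxProof3

theorem stmt_15
    {Ω : Type*} [MeasurableSpace Ω] (P : Measure Ω) [IsProbabilityMeasure P]
    (U : ℕ → Ω → ℝ) (hU : IsUniformSample P U)
    (h₁ h₂ : ℕ → ℝ) (hpos : ∀ n, 0 < h₁ n) (hle : ∀ n, h₁ n ≤ h₂ n) (hlt : ∀ n, h₂ n < 1)
    (hH11 : H1 h₁) (hH12 : H1 h₂) (hH21 : H2 h₁) (hH22 : H2 h₂)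
    (hH31 : H3 h₁) (hH32 : H3 h₂)
    (lam : ℝ) (hlam : 1 < lam) :
    ∀ᵐ ω ∂P, Tendsto (fun n =>
      ⨆ h : Icc (h₁ n) (h₂ n), (empQV U n (1 - lam * h.1) ω - (1 - h.1)) / h.1)
      atTop (nhds (1 - lam)) := by
  have hkey : ∀ m : ℕ, ∀ᵐ ω ∂P, ∀ᶠ n in atTop, ∀ h : ℝ, h₁ n ≤ h → h ≤ h₂ n →
      |empQV U n (1 - lam * h) ω - (1 - lam * h)| ≤ (min ((lam - 1)/2) (1/(m+1))) * h := by
    intro m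
    have hm0 : (0:ℝ) < 1/((m:ℝ)+1) := by positivity
    exact main_eps hU h₁ h₂ hpos hle hlt hH12.2.1 hH11.2.2.2 hH31 lam _ hlam
      (lt_min (by linarith) hm0)
      (le_trans (min_le_right _ _) (by rw [div_le_one (by positivity)]; linarith))
      (min_le_left _ _)
  filter_upwards [MeasureTheory.ae_all_iff.mpr hkey] with ω hω
  rw [Metric.tendsto_atTop]
  intro e he
  obtain ⟨m, hm⟩ := exists_nat_gt (1/e)
  have hm' : 1/((m:ℝ)+1) < e := by
    rw [div_lt_iff₀ (by positivity)]
    rw [div_lt_iff₀ he] at hm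
    nlinarith [he, hm]
  set εm : ℝ := min ((lam - 1)/2) (1/((m:ℝ)+1)) with hεm
  have hεm0 : 0 < εm := lt_min (by linarith) (by positivity)
  have hεme : εm < e := lt_of_le_of_lt (min_le_right _ _) hm'
  obtain ⟨N, hN⟩ := eventually_atTop.mp (hω m)
  refine ⟨N, fun n hn => ?_⟩
  have hbd : ∀ x : Icc (h₁ n) (h₂ n),
      |(empQV U n (1 - lam * x.1) ω - (1 - x.1)) / x.1 - (1 - lam)| ≤ εm := by
    rintro ⟨x, hx1, hx2⟩
    have hq : |empQV U n (1 - lam * x) ω - (1 - lam * x)| ≤ εm * x := by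
      have := hN n hn x hx1 hx2
      exact this
    have hx0 : 0 < x := lt_of_lt_of_le (hpos n) hx1
    have hre : (empQV U n (1 - lam * x) ω - (1 - x)) / x - (1 - lam)
        = (empQV U n (1 - lam * x) ω - (1 - lam * x)) / x := by
      field_simp
      ring
    rw [hre, abs_div, abs_of_pos hx0, div_le_iff₀ hx0]
    exact hq
  haveI hne : Nonempty (Icc (h₁ n) (h₂ n)) := ⟨⟨h₁ n, le_refl _, hle n⟩⟩
  have hbdd : BddAbove (Set.range fun x : Icc (h₁ n) (h₂ n) =>
      (empQV U n (1 - lam * x.1) ω - (1 - x.1)) / x.1) := by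
    refine ⟨(1 - lam) + εm, ?_⟩
    rintro - ⟨x, rfl⟩
    linarith [(abs_le.mp (hbd x)).2]
  have hsup_le : (⨆ x : Icc (h₁ n) (h₂ n),
      (empQV U n (1 - lam * x.1) ω - (1 - x.1)) / x.1) ≤ (1 - lam) + εm :=
    ciSup_le (fun x => by linarith [(abs_le.mp (hbd x)).2])
  have hle_sup : (1 - lam) - εm ≤ ⨆ x : Icc (h₁ n) (h₂ n),
      (empQV U n (1 - lam * x.1) ω - (1 - x.1)) / x.1 := by
    set x0 : Icc (h₁ n) (h₂ n) := ⟨h₁ n, le_refl _, hle n⟩ with hx0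
    refine le_trans ?_ (le_ciSup hbdd x0)
    linarith [(abs_le.mp (hbd x0)).1]
  rw [Real.dist_eq]
  rw [abs_lt]
  constructor <;> [linarith [hle_sup]; linarith [hsup_le]]
end
end
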